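/- arXiv:2103.15168 — 4 statements merged into one kernel-verified Lean document; each statement's English description precedes it below -/
import Mathlib

section
/- Let λ > 0, a₀ ∈ (0, 1/λ), v₃ > 0, s ∈ {+1, −1}, and ε ∈ {+1, −1}. Let ℓ_ε be defined by λℓ₊ = arcsin(λa₀) and λℓ₋ = π − arcsin(λa₀), and let ā_ε(τ) = sin(λ ℓ_ε τ)/λ. Then 3 s v₃ ∫₀¹ [ ā_ε(τ) ā_ε'(τ)²/ℓ_ε + ℓ_ε (ā_ε(τ) − λ² ā_ε(τ)³) ] dτ = s · (2v₃/λ²) · [ 1 − ε (1 − (λa₀)²)^{3/2} ]. -/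
/-- On-shell Euclidean actions of the small-cap (`ε = +1`) and big-cap (`ε = −1`)
instantons: `S̄_E^ε = s (2v₃/λ²) [1 − ε (1 − (λa₀)²)^{3/2}]`. -/
theorem instanton_on_shell_action
    (lam a₀ v₃ s ε ℓ : ℝ) (hlam : 0 < lam) (ha₀ : a₀ ∈ Set.Ioo 0 (1 / lam))
    (hv : 0 < v₃) (hs : s = 1 ∨ s = -1)
    (hℓ : (ε = 1 ∧ lam * ℓ = Real.arcsin (lam * a₀)) ∨
          (ε = -1 ∧ lam * ℓ = Real.pi - Real.arcsin (lam * a₀)))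
    (a : ℝ → ℝ) (ha : a = fun τ => Real.sin (lam * ℓ * τ) / lam) :
    3 * s * v₃ * ∫ τ in (0:ℝ)..1,
        (a τ * (deriv a τ) ^ 2 / ℓ + ℓ * (a τ - lam ^ 2 * (a τ) ^ 3))
      = s * (2 * v₃ / lam ^ 2) * (1 - ε * (1 - (lam * a₀) ^ 2) ^ ((3:ℝ)/2)) := by
  obtain ⟨ha₀0, ha₀1⟩ := ha₀
  have hx0 : 0 < lam * a₀ := mul_pos hlam ha₀0
  have hx1 : lam * a₀ < 1 := by
    rw [lt_div_iff₀ hlam] at ha₀1; nlinarith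
  set c := lam * ℓ with hc_def
  have hc : 0 < c := by
    rcases hℓ with ⟨_, h⟩ | ⟨_, h⟩
    · rw [h]; exact Real.arcsin_pos.2 hx0
    · rw [h]
      have h1 : Real.arcsin (lam * a₀) ≤ Real.pi / 2 := Real.arcsin_le_pi_div_two _
      have h2 : Real.pi / 2 < Real.pi := by linarith [Real.pi_pos]
      linarith
  have hl : 0 < ℓ := by nlinarith
  -- derivative of a
  have hderiv : ∀ τ : ℝ, deriv a τ = ℓ * Real.cos (c * τ) := by
    intro τ
    have h1 : HasDerivAt (fun τ => Real.sin (c * τ) / lam) (ℓ * Real.cos (c * τ)) τ := by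
      have := ((Real.hasDerivAt_sin (c * τ)).comp τ
        ((hasDerivAt_id τ).const_mul c)).div_const lam
      refine this.congr_deriv ?_
      field_simp
      ring
    rw [ha]
    exact h1.deriv
  -- integrand simplification
  have hfun : ∀ τ ∈ Set.uIcc (0:ℝ) 1,
      a τ * (deriv a τ) ^ 2 / ℓ + ℓ * (a τ - lam ^ 2 * (a τ) ^ 3)
      = (2 * ℓ / lam) * (Real.sin (c * τ) * Real.cos (c * τ) ^ 2) := by
    intro τ _
    rw [hderiv τ, ha]
    have hsc := Real.sin_sq_add_cos_sq (c * τ)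
    field_simp
    linear_combination (-1 * Real.sin (c*τ)) * hsc
  rw [intervalIntegral.integral_congr hfun]
  -- FTC
  have key : ∫ τ in (0:ℝ)..1, (2 * ℓ / lam) * (Real.sin (c * τ) * Real.cos (c * τ) ^ 2)
      = (2 * ℓ / lam) * ((1 - Real.cos c ^ 3) / (3 * c)) := by
    have hF : ∀ τ ∈ Set.uIcc (0:ℝ) 1,
        HasDerivAt (fun τ => -(2 * ℓ / lam) * Real.cos (c * τ) ^ 3 / (3 * c))
          ((2 * ℓ / lam) * (Real.sin (c * τ) * Real.cos (c * τ) ^ 2)) τ := by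
      intro τ _
      have h1 : HasDerivAt (fun τ => Real.cos (c * τ)) (-Real.sin (c * τ) * c) τ := by
        have := (Real.hasDerivAt_cos (c * τ)).comp τ ((hasDerivAt_id τ).const_mul c)
        refine this.congr_deriv ?_; ring
      have h3 := ((h1.pow 3).const_mul (-(2 * ℓ / lam))).div_const (3 * c)
      refine h3.congr_deriv ?_
      field_simp
      ring
    have hcont : IntervalIntegrable
        (fun τ => (2 * ℓ / lam) * (Real.sin (c * τ) * Real.cos (c * τ) ^ 2))
        MeasureTheory.volume 0 1 := by
      apply Continuous.intervalIntegrable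
      exact continuous_const.mul (((Real.continuous_sin.comp (continuous_const.mul continuous_id)).mul ((Real.continuous_cos.comp (continuous_const.mul continuous_id)).pow 2)))
    rw [intervalIntegral.integral_eq_sub_of_hasDerivAt hF hcont]
    norm_num
    field_simp
    ring
  rw [key]
  -- evaluate cos c
  have hsqrt3 : Real.sqrt (1 - (lam * a₀) ^ 2) ^ 3
      = (1 - (lam * a₀) ^ 2) ^ ((3:ℝ)/2) := by
    have hy : (0:ℝ) ≤ 1 - (lam * a₀) ^ 2 := by nlinarith
    rw [Real.sqrt_eq_rpow, ← Real.rpow_natCast ((1 - (lam*a₀)^2) ^ ((1:ℝ)/2)) 3,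
      ← Real.rpow_mul hy]
    norm_num
  have hcos : Real.cos c ^ 3 = ε * (1 - (lam * a₀) ^ 2) ^ ((3:ℝ)/2) := by
    rcases hℓ with ⟨he, h⟩ | ⟨he, h⟩
    · rw [hc_def] at h ⊢  -- maybe not needed
      rw [h, Real.cos_arcsin, he, one_mul, ← hsqrt3]
    · rw [h, Real.cos_pi_sub, Real.cos_arcsin, he, ← hsqrt3]
      ring
  rw [hcos]
  have hε2 : ε ^ 2 = 1 := by rcases hℓ with ⟨he, _⟩ | ⟨he, _⟩ <;> rw [he] <;> norm_num
  rw [hc_def]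
  field_simp
end

section
/- Let ℓ > 0. Define Φ₁(θ) = cos θ, Φ₂(θ) = −1 + (cos θ / 2) · ln((1 + cos θ)/(1 − cos θ)), and for θ* ∈ (0, π) set A(θ*) = sin θ* · Φ₂(θ*)/ℓ and B(θ*) = −sin θ* · cos θ*/ℓ. Then (i) the function Φ = A(θ*) Φ₁ + B(θ*) Φ₂ satisfies Φ(θ*) = 0 and Φ'(θ*) = 1/ℓ; and (ii) as θ* → 0⁺, A(θ*) · ℓ / (θ* · ln(1/θ*)) → 1 and B(θ*) · ℓ / θ* → −1. -/
open Filter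

/-- Solution of the regularized Gelfand–Yaglom initial-value problem for the
scale-factor fluctuation operator: `Φ = A(θ*) Φ₁ + B(θ*) Φ₂` with
`A(θ*) = sin θ* Φ₂(θ*)/ℓ`, `B(θ*) = −sin θ* cos θ*/ℓ` satisfies `Φ(θ*) = 0`,
`Φ'(θ*) = 1/ℓ`, and as `θ* → 0⁺` one has `A(θ*) ∼ (θ*/ℓ) ln(1/θ*)` and
`B(θ*) ∼ −θ*/ℓ`. -/
theorem gelfand_yaglom_initial_value_asymptotics
    (ℓ : ℝ) (hℓ : 0 < ℓ) (Φ₁ Φ₂ A B : ℝ → ℝ)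
    (hΦ₁ : Φ₁ = fun θ => Real.cos θ)
    (hΦ₂ : Φ₂ = fun θ =>
      -1 + (Real.cos θ / 2) * Real.log ((1 + Real.cos θ) / (1 - Real.cos θ)))
    (hA : A = fun t => Real.sin t * Φ₂ t / ℓ)
    (hB : B = fun t => -(Real.sin t * Real.cos t) / ℓ) :
    (∀ θs ∈ Set.Ioo 0 Real.pi,
      A θs * Φ₁ θs + B θs * Φ₂ θs = 0 ∧
      deriv (fun θ => A θs * Φ₁ θ + B θs * Φ₂ θ) θs = 1 / ℓ) ∧
    Tendsto (fun t => A t * ℓ / (t * Real.log (1 / t))) (nhdsWithin 0 (Set.Ioi 0))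
      (nhds 1) ∧
    Tendsto (fun t => B t * ℓ / t) (nhdsWithin 0 (Set.Ioi 0)) (nhds (-1)) := by
  have hℓ0 : ℓ ≠ 0 := ne_of_gt hℓ
  -- basic limit: sin t / t → 1 on 𝓝[≠]0
  have hsin : Tendsto (fun t : ℝ => Real.sin t / t) (nhdsWithin 0 {0}ᶜ) (nhds 1) := by
    have h := (Real.hasDerivAt_sin 0)
    rw [hasDerivAt_iff_tendsto_slope] at h
    refine Tendsto.congr (fun t => ?_) (by simpa using h)
    simp [slope_def_field]
  have hsub : nhdsWithin (0:ℝ) (Set.Ioi 0) ≤ nhdsWithin 0 {0}ᶜ :=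
    nhdsWithin_mono 0 (fun x hx => ne_of_gt hx)
  have hsin' : Tendsto (fun t : ℝ => Real.sin t / t) (nhdsWithin 0 (Set.Ioi 0)) (nhds 1) :=
    hsin.mono_left hsub
  have hcos : Tendsto Real.cos (nhdsWithin (0:ℝ) (Set.Ioi 0)) (nhds 1) := by
    simpa using (Real.continuous_cos.tendsto 0).mono_left nhdsWithin_le_nhds
  constructor
  · rintro θs ⟨h0, hπ⟩
    have hs : 0 < Real.sin θs := Real.sin_pos_of_pos_of_lt_pi h0 hπ
    have hc1 : Real.cos θs < 1 := by
      nlinarith [Real.sin_sq_add_cos_sq θs, Real.neg_one_le_cos θs]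
    have hc2 : -1 < Real.cos θs := by
      nlinarith [Real.sin_sq_add_cos_sq θs, Real.cos_le_one θs]
    have hp1 : (0:ℝ) < 1 + Real.cos θs := by linarith
    have hp2 : (0:ℝ) < 1 - Real.cos θs := by linarith
    constructor
    · subst hΦ₁ hA hB; dsimp only; ring
    · -- derivative of Φ₂
      have hev : (fun θ => -1 + (Real.cos θ / 2) *
            (Real.log (1 + Real.cos θ) - Real.log (1 - Real.cos θ))) =ᶠ[nhds θs] Φ₂ := by
        have hopen : IsOpen (Real.cos ⁻¹' Set.Ioo (-1) 1) :=
          isOpen_Ioo.preimage Real.continuous_cos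
        filter_upwards [hopen.mem_nhds (by exact ⟨hc2, hc1⟩)] with θ hθ
        obtain ⟨h1, h2⟩ := hθ
        simp only [hΦ₂]
        rw [Real.log_div (by linarith) (by linarith)]
      have hd1 : HasDerivAt (fun θ => Real.log (1 + Real.cos θ))
          (-Real.sin θs / (1 + Real.cos θs)) θs :=
        ((Real.hasDerivAt_cos θs).const_add 1).log (ne_of_gt hp1)
      have hd2 : HasDerivAt (fun θ => Real.log (1 - Real.cos θ))
          (Real.sin θs / (1 - Real.cos θs)) θs := by
        have := ((Real.hasDerivAt_cos θs).const_sub 1).log (ne_of_gt hp2)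
        simpa using this
      have hd3 : HasDerivAt (fun θ => -1 + (Real.cos θ / 2) *
            (Real.log (1 + Real.cos θ) - Real.log (1 - Real.cos θ)))
          ((-Real.sin θs / 2) * (Real.log (1 + Real.cos θs) - Real.log (1 - Real.cos θs))
            + (Real.cos θs / 2) * (-Real.sin θs / (1 + Real.cos θs)
              - Real.sin θs / (1 - Real.cos θs))) θs :=
        (((Real.hasDerivAt_cos θs).div_const 2).mul (hd1.sub hd2)).const_add (-1)
      have hd4 : HasDerivAt Φ₂
          ((-Real.sin θs / 2) * (Real.log (1 + Real.cos θs) - Real.log (1 - Real.cos θs))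
            + (Real.cos θs / 2) * (-Real.sin θs / (1 + Real.cos θs)
              - Real.sin θs / (1 - Real.cos θs))) θs := hd3.congr_of_eventuallyEq hev.symm
      have hΦ₁d : HasDerivAt Φ₁ (-Real.sin θs) θs := by
        rw [hΦ₁]; exact Real.hasDerivAt_cos θs
      have hmain : HasDerivAt (fun θ => A θs * Φ₁ θ + B θs * Φ₂ θ)
          (A θs * (-Real.sin θs) + B θs *
            ((-Real.sin θs / 2) * (Real.log (1 + Real.cos θs) - Real.log (1 - Real.cos θs))
            + (Real.cos θs / 2) * (-Real.sin θs / (1 + Real.cos θs)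
              - Real.sin θs / (1 - Real.cos θs)))) θs :=
        (hΦ₁d.const_mul (A θs)).add (hd4.const_mul (B θs))
      rw [hmain.deriv]
      subst hA hB hΦ₂; dsimp only
      rw [Real.log_div (ne_of_gt hp1) (ne_of_gt hp2)]
      have hsq : Real.sin θs ^ 2 + Real.cos θs ^ 2 = 1 := Real.sin_sq_add_cos_sq θs
      have e1 : -Real.sin θs / (1 + Real.cos θs) - Real.sin θs / (1 - Real.cos θs)
          = -2 / Real.sin θs := by
        field_simp
        linear_combination (-2:ℝ) * hsq
      rw [e1]
      field_simp
      ring_nf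
      linear_combination (2:ℝ) * hsq
  constructor
  · -- A asymptotics
    -- (1 - cos t)/t^2 → 1/2
    have hhalf : Tendsto (fun t : ℝ => Real.sin (t/2) / (t/2)) (nhdsWithin 0 (Set.Ioi 0))
        (nhds 1) := by
      apply hsin.comp
      rw [tendsto_nhdsWithin_iff]
      constructor
      · have : Tendsto (fun t : ℝ => t / 2) (nhds 0) (nhds (0 / 2)) :=
          tendsto_id.div_const 2
        norm_num at this
        exact this.mono_left nhdsWithin_le_nhds
      · filter_upwards [self_mem_nhdsWithin] with t (ht : 0 < t)
        simp only [Set.mem_compl_iff, Set.mem_singleton_iff]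
        positivity
    have hq : Tendsto (fun t : ℝ => (1 - Real.cos t) / t ^ 2) (nhdsWithin 0 (Set.Ioi 0))
        (nhds (1/2)) := by
      have heq : ∀ᶠ t in nhdsWithin (0:ℝ) (Set.Ioi 0),
          (1 - Real.cos t) / t ^ 2 = (Real.sin (t/2) / (t/2)) ^ 2 / 2 := by
        filter_upwards [self_mem_nhdsWithin] with t (ht : 0 < t)
        have h1 : 1 - Real.cos t = 2 * Real.sin (t/2) ^ 2 := by
          have h2 := Real.cos_two_mul (t/2)
          have h3 := Real.sin_sq_add_cos_sq (t/2)
          rw [show (2:ℝ) * (t/2) = t by ring] at h2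
          nlinarith
        rw [h1]
        field_simp
      rw [tendsto_congr' heq]
      have := ((hhalf.pow 2).div_const 2)
      simpa using this
    -- log(1-cos t)/? decomposition
    have hlogbot : Tendsto Real.log (nhdsWithin (0:ℝ) (Set.Ioi 0)) atBot :=
      Real.tendsto_log_nhdsGT_zero
    have hinv : Tendsto (fun t : ℝ => (-Real.log t)⁻¹) (nhdsWithin 0 (Set.Ioi 0)) (nhds 0) :=
      (tendsto_neg_atBot_atTop.comp hlogbot).inv_tendsto_atTop
    -- N t → -1 + log 2
    have hlog1 : Tendsto (fun t : ℝ => Real.log (1 + Real.cos t)) (nhdsWithin 0 (Set.Ioi 0))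
        (nhds (Real.log 2)) := by
      have : Tendsto (fun t : ℝ => 1 + Real.cos t) (nhdsWithin 0 (Set.Ioi 0)) (nhds 2) := by
        have h2' : Tendsto (fun t : ℝ => 1 + Real.cos t) (nhdsWithin 0 (Set.Ioi 0))
            (nhds (1 + 1)) := hcos.const_add 1
        norm_num at h2'
        exact h2'
      exact ((Real.continuousAt_log (by norm_num)).tendsto.comp this)
    have hlogq : Tendsto (fun t : ℝ => Real.log ((1 - Real.cos t) / t ^ 2))
        (nhdsWithin 0 (Set.Ioi 0)) (nhds (Real.log (1/2))) :=
      ((Real.continuousAt_log (by norm_num)).tendsto.comp hq)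
    set N : ℝ → ℝ := fun t => -1 + (Real.cos t / 2) * Real.log (1 + Real.cos t)
        - (Real.cos t / 2) * Real.log ((1 - Real.cos t) / t ^ 2) with hN
    have hNlim : Tendsto N (nhdsWithin 0 (Set.Ioi 0))
        (nhds (-1 + (1/2) * Real.log 2 - (1/2) * Real.log (1/2))) := by
      apply Tendsto.sub
      · exact tendsto_const_nhds.add (((hcos.div_const 2)).mul hlog1)
      · exact ((hcos.div_const 2)).mul hlogq
    -- G t = Φ₂ t / (-log t) = N t * (-log t)⁻¹ + cos t eventually
    have hG : Tendsto (fun t => Φ₂ t / (-Real.log t)) (nhdsWithin 0 (Set.Ioi 0)) (nhds 1) := by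
      have heq : ∀ᶠ t in nhdsWithin (0:ℝ) (Set.Ioi 0),
          Φ₂ t / (-Real.log t) = N t * (-Real.log t)⁻¹ + Real.cos t := by
        filter_upwards [Ioo_mem_nhdsGT_of_mem (by norm_num : (0:ℝ) ∈ Set.Ico 0 (1/2))]
          with t ht
        obtain ⟨ht0, ht1⟩ := ht
        have hsp : 0 < Real.sin t :=
          Real.sin_pos_of_pos_of_lt_pi ht0 (by linarith [Real.pi_gt_three])
        have hsq' := Real.sin_sq_add_cos_sq t
        have hp1 : (0:ℝ) < 1 + Real.cos t := by nlinarith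
        have hp2 : (0:ℝ) < 1 - Real.cos t := by nlinarith
        have hlt : Real.log t < 0 := Real.log_neg ht0 (by linarith)
        have hlne : Real.log t ≠ 0 := ne_of_lt hlt
        simp only [hΦ₂]
        rw [Real.log_div (ne_of_gt hp1) (ne_of_gt hp2)]
        have hsplit : Real.log (1 - Real.cos t) =
            Real.log ((1 - Real.cos t) / t ^ 2) + 2 * Real.log t := by
          rw [Real.log_div (ne_of_gt hp2) (by positivity), Real.log_pow]
          push_cast; ring
        rw [hsplit]
        simp only [hN]
        have hlne' : -Real.log t ≠ 0 := by simpa using hlne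
        field_simp
        ring
      rw [tendsto_congr' heq]
      have := (hNlim.mul hinv).add hcos
      simpa using this
    -- assemble
    have heqA : ∀ᶠ t in nhdsWithin (0:ℝ) (Set.Ioi 0),
        A t * ℓ / (t * Real.log (1 / t)) = (Real.sin t / t) * (Φ₂ t / (-Real.log t)) := by
      filter_upwards [Ioo_mem_nhdsGT_of_mem (by norm_num : (0:ℝ) ∈ Set.Ico 0 (1/2))]
        with t ht
      obtain ⟨ht0, ht1⟩ := ht
      have hlt : Real.log t < 0 := Real.log_neg ht0 (by linarith)
      simp only [hA]
      rw [one_div, Real.log_inv]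
      field_simp
      try ring
    rw [tendsto_congr' heqA]
    simpa using hsin'.mul hG
  · -- B asymptotics
    have heqB : ∀ᶠ t in nhdsWithin (0:ℝ) (Set.Ioi 0),
        B t * ℓ / t = -(Real.sin t / t * Real.cos t) := by
      filter_upwards [self_mem_nhdsWithin] with t (ht : 0 < t)
      simp only [hB]
      field_simp
    rw [tendsto_congr' heqB]
    simpa using (hsin'.mul hcos).neg
end

section
/- Let λ ∈ ℝ, ℓ > 0, let J ⊆ ℝ be an open interval, and let ā : J → ℝ be twice continuously differentiable with ā > 0 on J, satisfying (ā'(τ))² = ℓ²(1 − λ² ā(τ)²) and ā''(τ) = −λ² ℓ² ā(τ) on J. Let ζ : J → ℝ be differentiable with ζ'(τ) = ℓ / √(ā(τ)), and let χ : ℝ → ℝ be twice continuously differentiable. Define ψ(τ) = ā(τ)^{-1/4} · χ(ζ(τ)). Then for all τ ∈ J: −(ā(τ)/ℓ²) ψ''(τ) − (ā'(τ)/ℓ²) ψ'(τ) = −ā(τ)^{-1/4} · χ''(ζ(τ)) − (1/(16 ā(τ))) · (1 + 3 λ² ā(τ)²) · ψ(τ). -/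
/-- Reduction of the fluctuation operator to canonical (Schrödinger) form: with
`ζ' = ℓ/√ā` and `ψ = ā^{-1/4} χ(ζ)`, one has
`−(ā/ℓ²)ψ'' − (ā'/ℓ²)ψ' = −ā^{-1/4} χ''(ζ) − (1/(16ā))(1 + 3λ²ā²) ψ`
for any instanton `ā` solving the Friedmann equation. -/
theorem canonical_form_of_fluctuation_operator
    (lam ℓ : ℝ) (hℓ : 0 < ℓ) (J : Set ℝ) (hJopen : IsOpen J) (hJconn : J.OrdConnected)
    (abar : ℝ → ℝ) (habar : ContDiffOn ℝ 2 abar J)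
    (hpos : ∀ τ ∈ J, 0 < abar τ)
    (hfried : ∀ τ ∈ J, (deriv abar τ) ^ 2 = ℓ ^ 2 * (1 - lam ^ 2 * (abar τ) ^ 2))
    (heom : ∀ τ ∈ J, deriv (deriv abar) τ = -(lam ^ 2 * ℓ ^ 2) * abar τ)
    (ζ : ℝ → ℝ) (hζ : ∀ τ ∈ J, HasDerivAt ζ (ℓ / Real.sqrt (abar τ)) τ)
    (χ : ℝ → ℝ) (hχ : ContDiff ℝ 2 χ)
    (ψ : ℝ → ℝ) (hψ : ψ = fun τ => (abar τ) ^ (-1/4 : ℝ) * χ (ζ τ)) :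
    ∀ τ ∈ J,
      -(abar τ / ℓ ^ 2) * deriv (deriv ψ) τ - (deriv abar τ / ℓ ^ 2) * deriv ψ τ
        = -((abar τ) ^ (-1/4 : ℝ)) * deriv (deriv χ) (ζ τ)
          - (1 / (16 * abar τ)) * (1 + 3 * lam ^ 2 * (abar τ) ^ 2) * ψ τ := by
  -- basic differentiability facts
  have ha1 : ∀ t ∈ J, HasDerivAt abar (deriv abar t) t := by
    intro t ht
    have h := (habar.contDiffAt (hJopen.mem_nhds ht)).differentiableAt (by norm_num)
    exact h.hasDerivAt
  have haC1 : ContDiffOn ℝ 1 (deriv abar) J :=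
    habar.deriv_of_isOpen hJopen (by norm_num)
  have ha2 : ∀ t ∈ J, HasDerivAt (deriv abar) (deriv (deriv abar) t) t := by
    intro t ht
    exact (((haC1.differentiableOn (by norm_num)).differentiableAt
      (hJopen.mem_nhds ht))).hasDerivAt
  have hχ' : ContDiff ℝ 1 (deriv χ) := by
    have h2 : ContDiff ℝ (1 + 1 : ℕ) χ := by exact_mod_cast hχ
    exact (contDiff_succ_iff_deriv.mp (by exact_mod_cast h2)).2.2
  have hχ1 : ∀ x : ℝ, HasDerivAt χ (deriv χ x) x := fun x =>
    ((hχ.differentiable (by norm_num)) x).hasDerivAt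
  have hχ2 : ∀ x : ℝ, HasDerivAt (deriv χ) (deriv (deriv χ) x) x := fun x =>
    ((hχ'.differentiable (by norm_num)) x).hasDerivAt
  -- first derivative of ψ
  have hψ1 : ∀ t ∈ J, HasDerivAt ψ
      (-(1/4) * abar t ^ (-5/4 : ℝ) * deriv abar t * χ (ζ t)
        + ℓ * abar t ^ (-3/4 : ℝ) * deriv χ (ζ t)) t := by
    intro t ht
    have hA := hpos t ht
    have h1 : HasDerivAt (fun s => (abar s) ^ (-1/4 : ℝ))
        (deriv abar t * (-1/4 : ℝ) * abar t ^ ((-1/4 : ℝ) - 1)) t :=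
      (ha1 t ht).rpow_const (Or.inl hA.ne')
    have h2 : HasDerivAt (fun s => χ (ζ s))
        (deriv χ (ζ t) * (ℓ / Real.sqrt (abar t))) t :=
      (hχ1 (ζ t)).comp t (hζ t ht)
    have h := h1.mul h2
    rw [hψ]
    convert h using 1
    · rfl
    · rfl
    · rfl
    have e1 : ((-1/4 : ℝ) - 1) = (-5/4 : ℝ) := by norm_num
    have e2 : Real.sqrt (abar t) = abar t ^ (1/2 : ℝ) := Real.sqrt_eq_rpow _
    have e3 : abar t ^ (-1/4 : ℝ) / abar t ^ (1/2 : ℝ) = abar t ^ (-3/4 : ℝ) := by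
      rw [← Real.rpow_sub hA]; norm_num
    have e4 : abar t ^ (-1/4 : ℝ) * (deriv χ (ζ t) * (ℓ / abar t ^ (1/2 : ℝ)))
        = ℓ * abar t ^ (-3/4 : ℝ) * deriv χ (ζ t) := by
      rw [← e3]; ring
    rw [e1, e2, e4]
    ring
  have hDψ : ∀ t ∈ J, deriv ψ t
      = -(1/4) * abar t ^ (-5/4 : ℝ) * deriv abar t * χ (ζ t)
        + ℓ * abar t ^ (-3/4 : ℝ) * deriv χ (ζ t) := fun t ht => (hψ1 t ht).deriv
  intro τ hτ
  have hA := hpos τ hτ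
  -- second derivative
  have hT1 : HasDerivAt
      (fun s => -(1/4) * abar s ^ (-5/4 : ℝ) * deriv abar s * χ (ζ s))
      ((((-(1/4)) * (deriv abar τ * (-5/4 : ℝ) * abar τ ^ ((-5/4 : ℝ) - 1))) * deriv abar τ
          + (-(1/4) * abar τ ^ (-5/4 : ℝ)) * deriv (deriv abar) τ) * χ (ζ τ)
        + (-(1/4) * abar τ ^ (-5/4 : ℝ) * deriv abar τ)
            * (deriv χ (ζ τ) * (ℓ / Real.sqrt (abar τ)))) τ := by
    exact ((((ha1 τ hτ).rpow_const (Or.inl hA.ne')).const_mul (-(1/4))).mul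
      (ha2 τ hτ)).mul ((hχ1 (ζ τ)).comp τ (hζ τ hτ))
  have hT2 : HasDerivAt
      (fun s => ℓ * abar s ^ (-3/4 : ℝ) * deriv χ (ζ s))
      ((ℓ * (deriv abar τ * (-3/4 : ℝ) * abar τ ^ ((-3/4 : ℝ) - 1))) * deriv χ (ζ τ)
        + (ℓ * abar τ ^ (-3/4 : ℝ)) * (deriv (deriv χ) (ζ τ) * (ℓ / Real.sqrt (abar τ)))) τ := by
    exact ((((ha1 τ hτ).rpow_const (Or.inl hA.ne')).const_mul ℓ).mul
      ((hχ2 (ζ τ)).comp τ (hζ τ hτ)))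
  have hΦ := hT1.add hT2
  have hev : deriv ψ =ᶠ[nhds τ] fun s =>
      -(1/4) * abar s ^ (-5/4 : ℝ) * deriv abar s * χ (ζ s)
        + ℓ * abar s ^ (-3/4 : ℝ) * deriv χ (ζ s) :=
    Filter.eventuallyEq_of_mem (hJopen.mem_nhds hτ) hDψ
  have hD2 : deriv (deriv ψ) τ
      = (((-(1/4)) * (deriv abar τ * (-5/4 : ℝ) * abar τ ^ ((-5/4 : ℝ) - 1))) * deriv abar τ
          + (-(1/4) * abar τ ^ (-5/4 : ℝ)) * deriv (deriv abar) τ) * χ (ζ τ)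
        + (-(1/4) * abar τ ^ (-5/4 : ℝ) * deriv abar τ)
            * (deriv χ (ζ τ) * (ℓ / Real.sqrt (abar τ)))
        + ((ℓ * (deriv abar τ * (-3/4 : ℝ) * abar τ ^ ((-3/4 : ℝ) - 1))) * deriv χ (ζ τ)
          + (ℓ * abar τ ^ (-3/4 : ℝ)) * (deriv (deriv χ) (ζ τ) * (ℓ / Real.sqrt (abar τ)))) := by
    rw [hev.deriv_eq]; exact hΦ.deriv
  -- final algebra
  have hDψτ := hDψ τ hτ
  have hq : (0:ℝ) < abar τ ^ (1/4 : ℝ) := Real.rpow_pos_of_pos hA _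
  have hpow : ∀ k : ℕ, abar τ ^ (-(k:ℝ)/4) = ((abar τ ^ (1/4 : ℝ)) ^ k)⁻¹ := by
    intro k
    rw [show (-(k:ℝ)/4) = -(1/4*k) by ring, Real.rpow_neg hA.le, Real.rpow_mul hA.le,
      Real.rpow_natCast]
  have h14 : abar τ ^ (-1/4 : ℝ) = ((abar τ ^ (1/4 : ℝ)) ^ 1)⁻¹ := by
    rw [show (-1/4 : ℝ) = -((1:ℕ):ℝ)/4 by norm_num]; exact hpow 1
  have h54 : abar τ ^ (-5/4 : ℝ) = ((abar τ ^ (1/4 : ℝ)) ^ 5)⁻¹ := by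
    rw [show (-5/4 : ℝ) = -((5:ℕ):ℝ)/4 by norm_num]; exact hpow 5
  have h94 : abar τ ^ ((-5/4 : ℝ) - 1) = ((abar τ ^ (1/4 : ℝ)) ^ 9)⁻¹ := by
    rw [show ((-5/4 : ℝ) - 1) = -((9:ℕ):ℝ)/4 by norm_num]; exact hpow 9
  have h34 : abar τ ^ (-3/4 : ℝ) = ((abar τ ^ (1/4 : ℝ)) ^ 3)⁻¹ := by
    rw [show (-3/4 : ℝ) = -((3:ℕ):ℝ)/4 by norm_num]; exact hpow 3
  have h74 : abar τ ^ ((-3/4 : ℝ) - 1) = ((abar τ ^ (1/4 : ℝ)) ^ 7)⁻¹ := by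
    rw [show ((-3/4 : ℝ) - 1) = -((7:ℕ):ℝ)/4 by norm_num]; exact hpow 7
  have hA4 : abar τ = (abar τ ^ (1/4 : ℝ)) ^ 4 := by
    rw [← Real.rpow_natCast (abar τ ^ (1/4 : ℝ)) 4, ← Real.rpow_mul hA.le]; norm_num
  have hsq : Real.sqrt (abar τ) = (abar τ ^ (1/4 : ℝ)) ^ 2 := by
    rw [Real.sqrt_eq_rpow, show (1/2 : ℝ) = 1/4*((2:ℕ):ℝ) by norm_num, Real.rpow_mul hA.le,
      Real.rpow_natCast]
  set q := abar τ ^ (1/4 : ℝ) with hqdef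
  rw [heom τ hτ, hsq] at hD2
  have hfried2 : (deriv abar τ) ^ 2 = ℓ ^ 2 * (1 - lam ^ 2 * (q ^ 4) ^ 2) := by
    rw [← hA4]; exact hfried τ hτ
  rw [hD2, hDψτ, hψ]
  simp only [h14, h54, h94, h34, h74]
  rw [hA4]
  field_simp
  linear_combination (-16 * χ (ζ τ)) * hfried2
end

section
/- Let c > 0 and d ∈ ℝ, let ρ, μ : (0,∞) → ℝ be twice continuously differentiable with ρ > 0 and μ > 0, and let ω, V : (0,∞) → ℝ be continuous. For a twice continuously differentiable Ψ : (0,∞) → ℂ define (HΨ)(a) = (c/a) · [ Ψ''(a) + (ρ'(a)/ρ(a)) Ψ'(a) + ω(a) Ψ(a) ] − d · V(a) · Ψ(a). Suppose that for all twice continuously differentiable Ψ₁, Ψ₂ : (0,∞) → ℂ with compact support contained in (0,∞) one has ∫₀^∞ μ(a) · ( conj((HΨ₁)(a)) Ψ₂(a) − conj(Ψ₁(a)) (HΨ₂)(a) ) da = 0. Then there exists a constant κ > 0 such that μ(a) = κ · a · ρ(a) for all a > 0. -/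
open MeasureTheory

/-- The Wheeler–DeWitt Hamiltonian operator
`(HΨ)(a) = (c/a)[Ψ'' + (ρ'/ρ)Ψ' + ωΨ] − d V Ψ` of the minisuperspace model. -/
noncomputable def WDWHam (c d : ℝ) (ρ ω V : ℝ → ℝ) (Ψ : ℝ → ℂ) (a : ℝ) : ℂ :=
  (↑(c / a) : ℂ) * (deriv (deriv Ψ) a + (↑(deriv ρ a / ρ a) : ℂ) * deriv Ψ a
      + (↑(ω a) : ℂ) * Ψ a)
    - (↑(d * V a) : ℂ) * Ψ a

open Set Metric Function

private lemma wdw_vanish (D : ℝ → ℝ) (hD : ContinuousOn D (Set.Ioi 0))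
    (hQ : ∀ φ : ℝ → ℝ, ContDiff ℝ 2 φ → HasCompactSupport φ → tsupport φ ⊆ Set.Ioi 0 →
      (∫ a, D a * φ a ^ 2) = 0) :
    ∀ a₀ ∈ Set.Ioi (0:ℝ), D a₀ ≤ 0 := by
  intro a₀ ha₀
  by_contra hpos
  push_neg at hpos
  have hca : ContinuousAt D a₀ := hD.continuousAt (Ioi_mem_nhds ha₀)
  have hev : ∀ᶠ x in nhds a₀, 0 < D x := hca.eventually (eventually_gt_nhds hpos)
  rw [Metric.eventually_nhds_iff] at hev
  obtain ⟨ε, hε, hevb⟩ := hev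
  have ha0 : (0:ℝ) < a₀ := ha₀
  set δ : ℝ := min (ε/2) (a₀/2) with hδdef
  have hδ : 0 < δ := by positivity
  have hδε : δ < ε := by
    have : δ ≤ ε/2 := min_le_left _ _
    linarith
  have hδa : δ ≤ a₀/2 := min_le_right _ _
  have hball : ∀ x ∈ closedBall a₀ δ, 0 < D x := by
    intro x hx
    exact hevb (lt_of_le_of_lt (mem_closedBall.mp hx) hδε)
  have hballIoi : closedBall a₀ δ ⊆ Set.Ioi 0 := by
    intro x hx
    have := abs_sub_le_iff.mp (mem_closedBall.mp hx)
    simp only [Set.mem_Ioi]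
    linarith [this.1, this.2]
  set f : ContDiffBump a₀ := ⟨δ/2, δ, by positivity, by linarith⟩ with hfdef
  have hrin : f.rIn = δ/2 := rfl
  have hrout : f.rOut = δ := rfl
  have hfc : ContDiff ℝ 2 (⇑f) := f.contDiff
  have hfK : HasCompactSupport (⇑f) := f.hasCompactSupport
  have hfts : tsupport (⇑f) ⊆ Set.Ioi 0 := by
    rw [f.tsupport_eq, hrout]; exact hballIoi
  have hz := hQ (⇑f) hfc hfK hfts
  -- the integrand
  set h : ℝ → ℝ := fun a => D a * f a ^ 2 with hhdef
  have hnonneg : ∀ a, 0 ≤ h a := by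
    intro a
    by_cases ha : a ∈ closedBall a₀ δ
    · exact mul_nonneg (hball a ha).le (sq_nonneg _)
    · have : f a = 0 := by
        rw [← notMem_support, f.support_eq, hrout]
        exact fun hb => ha (ball_subset_closedBall hb)
      simp [hhdef, this]
  have hsupp : support h ⊆ tsupport (⇑f) := by
    intro x hx
    apply subset_tsupport
    intro h0
    apply hx
    simp [hhdef, h0]
  have hcont : Continuous h := by
    rw [continuous_iff_continuousAt]
    intro x
    by_cases hx : x ∈ Set.Ioi (0:ℝ)
    · exact (hD.continuousAt (Ioi_mem_nhds hx)).mul ((((f.contDiff (n:=2)).continuous).pow 2).continuousAt)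
    · have hx' : x ∉ tsupport (⇑f) := fun hmem => hx (hfts hmem)
      have hev0 : ∀ᶠ y in nhds x, h y = 0 := by
        filter_upwards [(isClosed_tsupport (⇑f)).isOpen_compl.mem_nhds hx'] with y hy
        have : f y = 0 := image_eq_zero_of_notMem_tsupport hy
        simp [hhdef, this]
      exact ContinuousAt.congr continuousAt_const (hev0.mono (fun y hy => hy.symm))
  have hK : HasCompactSupport h := hfK.mono' (hsupp)
  have hint : Integrable h := hcont.integrable_of_hasCompactSupport hK
  have hpos' : 0 < ∫ a, h a := by
    rw [integral_pos_iff_support_of_nonneg hnonneg hint]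
    have hb : ball a₀ (δ/2) ⊆ support h := by
      intro x hx
      have h1 : f x = 1 := f.one_of_mem_closedBall (by rw [hrin]; exact ball_subset_closedBall hx)
      have h2 : 0 < D x := hball x (closedBall_subset_closedBall (by linarith) (ball_subset_closedBall hx))
      simp [hhdef, h1, h2.ne']
    calc (0:ENNReal) < volume (ball a₀ (δ/2)) := measure_ball_pos _ _ (by positivity)
      _ ≤ volume (support h) := measure_mono hb
  rw [hz] at hpos'
  exact lt_irrefl _ hpos'

/-- Hermiticity of the Wheeler–DeWitt Hamiltonian with respect to the inner product
`⟨Ψ₁, Ψ₂⟩ = ∫₀^∞ μ Ψ₁* Ψ₂ da` forces the measure to be `μ(a) = κ a ρ(a)`. -/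
theorem wdw_hermiticity_fixes_measure
    (c d : ℝ) (hc : 0 < c) (ρ μ : ℝ → ℝ)
    (hρ : ContDiffOn ℝ 2 ρ (Set.Ioi 0)) (hμ : ContDiffOn ℝ 2 μ (Set.Ioi 0))
    (hρpos : ∀ a ∈ Set.Ioi (0:ℝ), 0 < ρ a)
    (hμpos : ∀ a ∈ Set.Ioi (0:ℝ), 0 < μ a)
    (ω V : ℝ → ℝ)
    (hω : ContinuousOn ω (Set.Ioi 0)) (hV : ContinuousOn V (Set.Ioi 0))
    (hherm : ∀ Ψ₁ Ψ₂ : ℝ → ℂ,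
      ContDiff ℝ 2 Ψ₁ → ContDiff ℝ 2 Ψ₂ →
      HasCompactSupport Ψ₁ → HasCompactSupport Ψ₂ →
      tsupport Ψ₁ ⊆ Set.Ioi 0 → tsupport Ψ₂ ⊆ Set.Ioi 0 →
      (∫ a in Set.Ioi (0:ℝ),
        (↑(μ a) : ℂ) * ((starRingEnd ℂ) (WDWHam c d ρ ω V Ψ₁ a) * Ψ₂ a
          - (starRingEnd ℂ) (Ψ₁ a) * WDWHam c d ρ ω V Ψ₂ a)) = 0) :
    ∃ κ : ℝ, 0 < κ ∧ ∀ a ∈ Set.Ioi (0:ℝ), μ a = κ * (a * ρ a) := by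
  have hμdiff : ∀ a ∈ Set.Ioi (0:ℝ), DifferentiableAt ℝ μ a := fun a ha =>
    ((hμ.differentiableOn (by norm_num)).differentiableAt (Ioi_mem_nhds ha))
  have hρdiff : ∀ a ∈ Set.Ioi (0:ℝ), DifferentiableAt ℝ ρ a := fun a ha =>
    ((hρ.differentiableOn (by norm_num)).differentiableAt (Ioi_mem_nhds ha))
  set G : ℝ → ℝ := fun a => μ a * c / a with hGdef
  have hGdiff : ∀ a ∈ Set.Ioi (0:ℝ),
      HasDerivAt G ((deriv μ a * c * a - μ a * c * 1) / a ^ 2) a := by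
    intro a ha
    exact ((hμdiff a ha).hasDerivAt.mul_const c).div (hasDerivAt_id a) (ne_of_gt ha)
  have hGc2 : ContDiffOn ℝ 2 G (Set.Ioi 0) :=
    (hμ.mul contDiffOn_const).div contDiffOn_id (fun a ha => ne_of_gt ha)
  have hG' : ContinuousOn (deriv G) (Set.Ioi 0) :=
    hGc2.continuousOn_deriv_of_isOpen isOpen_Ioi (by norm_num)
  have hGcont : ContinuousOn G (Set.Ioi 0) := hGc2.continuousOn
  set E : ℝ → ℝ := fun a => G a * (deriv ρ a / ρ a) - deriv G a with hEdef
  have hEcont : ContinuousOn E (Set.Ioi 0) :=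
    (hGcont.mul ((hρ.continuousOn_deriv_of_isOpen isOpen_Ioi (by norm_num)).div
      hρ.continuousOn (fun a ha => (hρpos a ha).ne'))).sub hG'
  have key : ∀ φ : ℝ → ℝ, ContDiff ℝ 2 φ → HasCompactSupport φ → tsupport φ ⊆ Set.Ioi 0 →
      (∫ a, E a * φ a ^ 2) = 0 := by
    intro φ hφ hφK hφs
    by_cases hne : (tsupport φ).Nonempty
    swap
    · have hz : ∀ a, φ a = 0 := fun a =>
        image_eq_zero_of_notMem_tsupport (by simp [Set.not_nonempty_iff_eq_empty.mp hne])
      simp [hz]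
    -- basic differentiability facts
    have hφ1 : Differentiable ℝ φ := hφ.differentiable (by norm_num)
    have hφd : ContDiff ℝ 1 (deriv φ) := by
      have h2 : ContDiff ℝ (1 + 1 : ℕ) φ := by exact_mod_cast hφ
      exact (contDiff_succ_iff_deriv.mp h2).2.2
    have hφdd : Differentiable ℝ (deriv φ) := hφd.differentiable (by norm_num)
    have hφdc : Continuous (deriv φ) := hφd.continuous
    set ψ : ℝ → ℝ := fun a => a * φ a with hψdef
    have hψ : ContDiff ℝ 2 ψ := contDiff_id.mul hφ
    have hψ1 : Differentiable ℝ ψ := hψ.differentiable (by norm_num)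
    set Ψ₁ : ℝ → ℂ := fun a => ((φ a : ℝ) : ℂ) with hΨ₁def
    set Ψ₂ : ℝ → ℂ := fun a => ((ψ a : ℝ) : ℂ) with hΨ₂def
    -- derivatives
    have dψ : deriv ψ = fun a => φ a + a * deriv φ a := by
      funext a
      have h := (hasDerivAt_id a).mul (hφ1 a).hasDerivAt
      exact h.deriv.trans (by simp)
    have hψ1d : Differentiable ℝ (deriv ψ) := by
      rw [dψ]; exact hφ1.add (differentiable_id.mul hφdd)
    have ddψ : deriv (deriv ψ) = fun a => 2 * deriv φ a + a * deriv (deriv φ) a := by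
      rw [dψ]; funext a
      have h : HasDerivAt (fun a => φ a + a * deriv φ a)
          (deriv φ a + (1 * deriv φ a + a * deriv (deriv φ) a)) a :=
        ((hφ1 a).hasDerivAt).add ((hasDerivAt_id a).mul (hφdd a).hasDerivAt)
      rw [h.deriv]; ring
    have dΨ₁ : deriv Ψ₁ = fun a => ((deriv φ a : ℝ) : ℂ) :=
      funext fun a => ((hφ1 a).hasDerivAt.ofReal_comp).deriv
    have ddΨ₁ : deriv (deriv Ψ₁) = fun a => ((deriv (deriv φ) a : ℝ) : ℂ) := by
      rw [dΨ₁]; exact funext fun a => ((hφdd a).hasDerivAt.ofReal_comp).deriv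
    have dΨ₂ : deriv Ψ₂ = fun a => ((deriv ψ a : ℝ) : ℂ) :=
      funext fun a => ((hψ1 a).hasDerivAt.ofReal_comp).deriv
    have ddΨ₂ : deriv (deriv Ψ₂) = fun a => ((deriv (deriv ψ) a : ℝ) : ℂ) := by
      rw [dΨ₂]; exact funext fun a => ((hψ1d a).hasDerivAt.ofReal_comp).deriv
    -- hypotheses of hherm
    have hΨ₁c : ContDiff ℝ 2 Ψ₁ := Complex.ofRealCLM.contDiff.comp hφ
    have hΨ₂c : ContDiff ℝ 2 Ψ₂ := Complex.ofRealCLM.contDiff.comp hψ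
    have hψK : HasCompactSupport ψ := hφK.mono (fun x hx => by
      simp only [mem_support] at hx ⊢
      intro h0; apply hx; simp [hψdef, h0])
    have hψs : tsupport ψ ⊆ Set.Ioi 0 :=
      (closure_mono (fun x hx => by
        simp only [mem_support] at hx ⊢
        intro h0; apply hx; simp [hψdef, h0])).trans hφs
    have hΨ₁K : HasCompactSupport Ψ₁ := hφK.comp_left (g := Complex.ofReal) (by simp)
    have hΨ₂K : HasCompactSupport Ψ₂ := hψK.comp_left (g := Complex.ofReal) (by simp)
    have hΨ₁s : tsupport Ψ₁ ⊆ Set.Ioi 0 :=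
      (closure_mono (fun x hx => by
        simp only [mem_support] at hx ⊢
        intro h0; apply hx; simp [hΨ₁def, h0])).trans hφs
    have hΨ₂s : tsupport Ψ₂ ⊆ Set.Ioi 0 :=
      (closure_mono (fun x hx => by
        simp only [mem_support] at hx ⊢
        intro h0; apply hx; simp [hΨ₂def, h0])).trans hψs
    have hint0 := hherm Ψ₁ Ψ₂ hΨ₁c hΨ₂c hΨ₁K hΨ₂K hΨ₁s hΨ₂s
    -- pointwise computation of the integrand
    have hpoint : ∀ a, (↑(μ a) : ℂ) * ((starRingEnd ℂ) (WDWHam c d ρ ω V Ψ₁ a) * Ψ₂ a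
          - (starRingEnd ℂ) (Ψ₁ a) * WDWHam c d ρ ω V Ψ₂ a)
        = ((-(μ a * c / a * (2 * φ a * deriv φ a + deriv ρ a / ρ a * φ a ^ 2)) : ℝ) : ℂ) := by
      intro a
      have e1 := congrFun ddΨ₁ a
      have e2 := congrFun dΨ₁ a
      have e3 := congrFun ddΨ₂ a
      have e4 := congrFun dΨ₂ a
      have e5 := congrFun ddψ a
      have e6 := congrFun dψ a
      simp only [WDWHam]
      rw [e1, e3, e2, e4, e5, e6]
      simp only [hΨ₁def, hΨ₂def, hψdef]
      simp only [map_sub, map_add, map_mul, Complex.conj_ofReal]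
      push_cast
      ring
    simp only [hpoint] at hint0
    have hreal : (∫ a in Set.Ioi (0:ℝ),
        -(μ a * c / a * (2 * φ a * deriv φ a + deriv ρ a / ρ a * φ a ^ 2))) = 0 := by
      have h2 : ((∫ a in Set.Ioi (0:ℝ),
          -(μ a * c / a * (2 * φ a * deriv φ a + deriv ρ a / ρ a * φ a ^ 2)) : ℝ) : ℂ) = 0 :=
        (integral_ofReal (𝕜 := ℂ)).symm.trans hint0
      exact_mod_cast h2
    rw [integral_neg, neg_eq_zero] at hreal
    set F : ℝ → ℝ := fun a =>
      G a * (2 * φ a * deriv φ a) + G a * (deriv ρ a / ρ a) * φ a ^ 2 with hFdef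
    have hFeq : (fun a => μ a * c / a * (2 * φ a * deriv φ a + deriv ρ a / ρ a * φ a ^ 2))
        = F := funext fun a => by rw [hFdef]; simp only [hGdef]; ring
    rw [hFeq] at hreal
    -- localization interval
    set ε : ℝ := sInf (tsupport φ) with hεdef
    set R : ℝ := sSup (tsupport φ) with hRdef
    have hεmem : ε ∈ tsupport φ := hφK.sInf_mem hne
    have hε : 0 < ε := hφs hεmem
    have hKIcc : tsupport φ ⊆ Set.Icc ε R := fun x hx =>
      ⟨csInf_le hφK.bddBelow hx, le_csSup hφK.bddAbove hx⟩
    have hεR : ε ≤ R := le_csSup hφK.bddAbove hεmem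
    set l : ℝ := ε / 2 with hldef
    set r : ℝ := R + 1 with hrdef
    have hl : 0 < l := by positivity
    have hlε : l < ε := by rw [hldef]; linarith
    have hRr : R < r := by rw [hrdef]; linarith
    have hlr : l ≤ r := by linarith
    have hIcc : Set.Icc l r ⊆ Set.Ioi 0 := fun x hx => lt_of_lt_of_le hl hx.1
    have huIcc : Set.uIcc l r ⊆ Set.Ioi 0 := by rw [Set.uIcc_of_le hlr]; exact hIcc
    -- vanishing facts
    have hφ0 : ∀ x, x ∉ tsupport φ → φ x = 0 := fun x hx => image_eq_zero_of_notMem_tsupport hx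
    have hφ'0 : ∀ x, x ∉ tsupport φ → deriv φ x = 0 := fun x hx => by
      by_contra h; exact hx (support_deriv_subset (mem_support.mpr h))
    have hF0 : ∀ x, x ∉ tsupport φ → F x = 0 := fun x hx => by
      rw [hFdef]; simp [hφ0 x hx, hφ'0 x hx]
    have hKIoc : tsupport φ ⊆ Set.Ioc l r := fun x hx =>
      ⟨lt_of_lt_of_le hlε (hKIcc hx).1, le_trans (hKIcc hx).2 hRr.le⟩
    have hl0 : φ l = 0 := hφ0 l (fun h => absurd (hKIcc h).1 (by linarith))
    have hr0 : φ r = 0 := hφ0 r (fun h => absurd (hKIcc h).2 (by linarith))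
    -- reduce to interval integral
    have h1 : (∫ a in Set.Ioi (0:ℝ), F a) = ∫ a, F a :=
      setIntegral_eq_integral_of_forall_compl_eq_zero
        (fun x hx => hF0 x (fun hmem => hx (hφs hmem)))
    have h2 : (∫ x in l..r, F x) = ∫ x, F x :=
      intervalIntegral.integral_eq_integral_of_support_subset
        (fun x hx => hKIoc (by_contra fun h => hx (hF0 x h)))
    have hItv : (∫ x in l..r, F x) = 0 := by rw [h2, ← h1, hreal]
    -- integrability
    have hGcOn : ContinuousOn G (Set.uIcc l r) := hGcont.mono huIcc
    have hu'c : Continuous (fun x => 2 * φ x * deriv φ x) :=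
      (continuous_const.mul hφ.continuous).mul hφdc
    have hpc : ContinuousOn (fun x => deriv ρ x / ρ x) (Set.uIcc l r) :=
      ((hρ.continuousOn_deriv_of_isOpen isOpen_Ioi (by norm_num)).div
        hρ.continuousOn (fun a ha => (hρpos a ha).ne')).mono huIcc
    have hAint : IntervalIntegrable (fun x => G x * (2 * φ x * deriv φ x)) volume l r :=
      (hGcOn.mul hu'c.continuousOn).intervalIntegrable
    have hBint : IntervalIntegrable (fun x => G x * (deriv ρ x / ρ x) * φ x ^ 2) volume l r :=
      ((hGcOn.mul hpc).mul ((hφ.continuous.pow 2).continuousOn)).intervalIntegrable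
    have hG'On : ContinuousOn (deriv G) (Set.uIcc l r) := hG'.mono huIcc
    have hG'int : IntervalIntegrable (deriv G) volume l r := hG'On.intervalIntegrable
    have hu'int : IntervalIntegrable (fun x => 2 * φ x * deriv φ x) volume l r :=
      hu'c.intervalIntegrable _ _
    have hDGuint : IntervalIntegrable (fun x => deriv G x * φ x ^ 2) volume l r :=
      (hG'On.mul ((hφ.continuous.pow 2).continuousOn)).intervalIntegrable
    -- integration by parts
    have hasu : ∀ x, HasDerivAt (fun y => φ y ^ 2) (2 * φ x * deriv φ x) x := by
      intro x
      have h := ((hφ1 x).hasDerivAt).pow 2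
      norm_num at h
      exact h
    have hGder : ∀ x ∈ Set.uIcc l r, HasDerivAt G (deriv G x) x := fun x hx =>
      ((hGdiff x (huIcc hx)).differentiableAt).hasDerivAt
    have hIBP := intervalIntegral.integral_mul_deriv_eq_deriv_mul hGder
      (fun x _ => hasu x) hG'int hu'int
    have hItv' : (∫ x in l..r, G x * (2 * φ x * deriv φ x))
        + (∫ x in l..r, G x * (deriv ρ x / ρ x) * φ x ^ 2) = 0 := by
      rw [← intervalIntegral.integral_add hAint hBint]
      exact hItv
    have hAeq : (∫ x in l..r, G x * (2 * φ x * deriv φ x))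
        = - ∫ x in l..r, deriv G x * φ x ^ 2 := by
      rw [hIBP, hl0, hr0]; ring
    -- conclude
    have hEu : support (fun a => E a * φ a ^ 2) ⊆ Set.Ioc l r := fun x hx => by
      refine hKIoc (subset_tsupport φ ?_)
      intro h0
      exact hx (by simp [h0])
    rw [← intervalIntegral.integral_eq_integral_of_support_subset hEu]
    have hcongr : (∫ x in l..r, E x * φ x ^ 2)
        = (∫ x in l..r, G x * (deriv ρ x / ρ x) * φ x ^ 2)
          - ∫ x in l..r, deriv G x * φ x ^ 2 := by
      rw [← intervalIntegral.integral_sub hBint hDGuint]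
      apply intervalIntegral.integral_congr
      intro x _
      simp only [hEdef]; ring
    rw [hcongr]
    linarith [hItv', hAeq]
  have hEzero : ∀ a ∈ Set.Ioi (0:ℝ), E a = 0 := by
    intro a ha
    have h1 := wdw_vanish E hEcont key a ha
    have h2 := wdw_vanish (fun x => -E x) hEcont.neg (fun φ h1 h2 h3 => by
      have hk := key φ h1 h2 h3
      simp only [neg_mul]
      rw [integral_neg, hk, neg_zero]) a ha
    simp only [neg_nonpos] at h2
    linarith
  have hFderiv : ∀ a ∈ Set.Ioi (0:ℝ), HasDerivAt (fun x => μ x / (x * ρ x)) 0 a := by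
    intro a ha
    have ha0 : (0:ℝ) < a := ha
    have hρa := hρpos a ha
    have hden : HasDerivAt (fun x => x * ρ x) (1 * ρ a + a * deriv ρ a) a :=
      (hasDerivAt_id a).mul (hρdiff a ha).hasDerivAt
    have hq := (hμdiff a ha).hasDerivAt.div hden (by positivity : (0:ℝ) < a * ρ a).ne'
    have hg := (hGdiff a ha).deriv
    have he := hEzero a ha
    simp only [hEdef, hGdef] at he hg
    rw [hg] at he
    have hnum : deriv μ a * (a * ρ a) - μ a * (1 * ρ a + a * deriv ρ a) = 0 := by
      field_simp at he
      have h3 : c * (a * (deriv μ a * (a * ρ a) - μ a * (1 * ρ a + a * deriv ρ a))) = 0 := by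
        linear_combination -a * he
      rcases mul_eq_zero.mp h3 with h | h
      · exact absurd h hc.ne'
      · rcases mul_eq_zero.mp h with h' | h'
        · exact absurd h' ha0.ne'
        · exact h'
    rw [hnum, zero_div] at hq
    exact hq
  set κ := μ 1 / (1 * ρ 1) with hκdef
  have h1mem : (1:ℝ) ∈ Set.Ioi (0:ℝ) := by norm_num
  have hκpos : 0 < κ := by
    rw [hκdef]
    have := hμpos 1 h1mem
    have := hρpos 1 h1mem
    positivity
  refine ⟨κ, hκpos, ?_⟩
  intro a ha
  have ha0 : (0:ℝ) < a := ha
  have hρa := hρpos a ha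
  have hconst : μ a / (a * ρ a) = μ 1 / (1 * ρ 1) := by
    exact (convex_Ioi (0:ℝ)).is_const_of_fderivWithin_eq_zero
      (f := fun x => μ x / (x * ρ x))
      (fun x hx => ((hFderiv x hx).differentiableAt).differentiableWithinAt)
      (fun x hx => by
        have h := (hasDerivAt_iff_hasFDerivAt.mp (hFderiv x hx)).hasFDerivWithinAt.fderivWithin
          ((uniqueDiffOn_Ioi 0) x hx)
        rw [h]
        exact ContinuousLinearMap.ext fun y => by simp)
      ha h1mem
  have haρ : a * ρ a ≠ 0 := by positivity
  rw [hκdef, ← hconst]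
  field_simp
end
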